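/- Let A be a complex Banach algebra. If a ∈ A has a generalized Hirano inverse, then for every n ≥ 1 the element aⁿ has a generalized Hirano inverse and (aⁿ)^h = (a^h)ⁿ. -/

import Mathlib

/-- `a` is quasinilpotent: `1 + a*x` is a unit for every `x` commuting with `a`. -/
def IsQuasinilpotent {R : Type*} [Ring R] (a : R) : Prop :=
  ∀ x : R, x * a = a * x → IsUnit (1 + a * x)

/-- `x` lies in the double commutant of `a`. -/
def InDoubleCommutant {R : Type*} [Ring R] (a x : R) : Prop :=
  ∀ y : R, y * a = a * y → x * y = y * x

/-- `b` is a generalized Hirano inverse of `a`. -/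
def IsGHInverse {R : Type*} [Ring R] (a b : R) : Prop :=
  b * a * b = b ∧ InDoubleCommutant a b ∧ IsQuasinilpotent (a ^ 2 - a * b)

open Filter Finset
open scoped ENNReal NNReal

section RingIdentities

variable {R : Type*} [Ring R] (p y q : R)

private lemma GH_key1 (hpp : p*p = p) (hqp : q*p = p*q)
    (hE : y*p - p*y = q*y - y*q) :
    (p*y - p*y*p) = (p*y - p*y*p)*q - q*(p*y - p*y*p) := by
  have hpp' : ∀ z, p*(p*z) = p*z := fun z => by rw [← mul_assoc, hpp]
  have hqp' : ∀ z, q*(p*z) = p*(q*z) := fun z => by rw [← mul_assoc, hqp, mul_assoc]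
  have h1 : p * (y*p - p*y) * (1 - p) = p * (q*y - y*q) * (1 - p) := by rw [hE]
  have hL : p * (y*p - p*y) * (1 - p) = -(p*y - p*y*p) := by
    simp only [mul_sub, sub_mul, mul_add, add_mul, mul_one, one_mul, mul_assoc, hpp, hpp',
      hqp, hqp']
    abel
  have hR : p * (q*y - y*q) * (1 - p) = q*(p*y - p*y*p) - (p*y - p*y*p)*q := by
    simp only [mul_sub, sub_mul, mul_add, add_mul, mul_one, one_mul, mul_assoc, hpp, hpp',
      hqp, hqp']
    abel
  have h2 : -(p*y - p*y*p) = q*(p*y - p*y*p) - (p*y - p*y*p)*q := by rw [← hL, h1, hR]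
  exact neg_injective (h2.trans (neg_sub ((p*y - p*y*p)*q) (q*(p*y - p*y*p))).symm)

private lemma GH_key2 (hpp : p*p = p) (hqp : q*p = p*q)
    (hE : y*p - p*y = q*y - y*q) :
    (y*p - p*y*p) = q*(y*p - p*y*p) - (y*p - p*y*p)*q := by
  have hpp' : ∀ z, p*(p*z) = p*z := fun z => by rw [← mul_assoc, hpp]
  have hqp' : ∀ z, q*(p*z) = p*(q*z) := fun z => by rw [← mul_assoc, hqp, mul_assoc]
  have h1 : (1 - p) * (y*p - p*y) * p = (1 - p) * (q*y - y*q) * p := by rw [hE]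
  have hL : (1 - p) * (y*p - p*y) * p = y*p - p*y*p := by
    simp only [mul_sub, sub_mul, mul_add, add_mul, mul_one, one_mul, mul_assoc, hpp, hpp',
      hqp, hqp']
    abel
  have hR : (1 - p) * (q*y - y*q) * p = q*(y*p - p*y*p) - (y*p - p*y*p)*q := by
    simp only [mul_sub, sub_mul, mul_add, add_mul, mul_one, one_mul, mul_assoc, hpp, hpp',
      hqp, hqp']
  exact hL.symm.trans (h1.trans hR)

end RingIdentities

section Banach

variable {A : Type*} [NormedRing A] [NormedAlgebra ℂ A] [CompleteSpace A]

/-- all powers eventually decay geometrically, at any rate -/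
private def Snil (q : A) : Prop := ∀ ε : ℝ, 0 < ε → ∃ N : ℕ, ∀ n ≥ N, ‖q ^ n‖ ≤ ε ^ n

private lemma snil_of_radius_zero {q : A} (h : spectralRadius ℂ q = 0) : Snil q := by
  intro ε hε
  have hg := spectrum.pow_norm_pow_one_div_tendsto_nhds_spectralRadius q
  rw [h] at hg
  have hev : ∀ᶠ n : ℕ in atTop, ENNReal.ofReal (‖q ^ n‖ ^ (1 / (n:ℝ))) < ENNReal.ofReal ε := by
    refine hg.eventually_lt_const ?_
    simpa using hε
  obtain ⟨N, hN⟩ := eventually_atTop.mp hev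
  refine ⟨max N 1, fun n hn => ?_⟩
  have hn1 : 1 ≤ n := le_trans (le_max_right N 1) hn
  have hlt : ‖q ^ n‖ ^ (1 / (n:ℝ)) < ε := by
    have := hN n (le_trans (le_max_left N 1) hn)
    rwa [ENNReal.ofReal_lt_ofReal_iff hε] at this
  have hnn : (0:ℝ) < (n:ℝ) := by exact_mod_cast hn1
  have key : (‖q ^ n‖ ^ (1 / (n:ℝ))) ^ (n:ℕ) < ε ^ n :=
    pow_lt_pow_left₀ hlt (Real.rpow_nonneg (norm_nonneg _) _) (by omega)
  have : (‖q ^ n‖ ^ (1 / (n:ℝ))) ^ (n:ℕ) = ‖q ^ n‖ := by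
    rw [← Real.rpow_natCast (‖q ^ n‖ ^ (1 / (n:ℝ))) n, ← Real.rpow_mul (norm_nonneg _),
      one_div, inv_mul_cancel₀ hnn.ne', Real.rpow_one]
  linarith [this ▸ key]

private lemma radius_zero_of_snil {q : A} (h : Snil q) : spectralRadius ℂ q = 0 := by
  have hg := spectrum.pow_norm_pow_one_div_tendsto_nhds_spectralRadius q
  refine le_antisymm ?_ zero_le
  refine ENNReal.le_of_forall_pos_le_add fun ε hε _ => ?_
  rw [zero_add]
  obtain ⟨N, hN⟩ := h ε (by exact_mod_cast hε)
  refine le_of_tendsto hg ?_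
  filter_upwards [eventually_ge_atTop (max N 1)] with n hn
  have hn1 : 1 ≤ n := le_trans (le_max_right N 1) hn
  have hb : ‖q ^ n‖ ≤ (ε:ℝ) ^ n := hN n (le_trans (le_max_left N 1) hn)
  have hnn : (0:ℝ) < (n:ℝ) := by exact_mod_cast hn1
  calc ENNReal.ofReal (‖q ^ n‖ ^ (1 / (n:ℝ)))
      ≤ ENNReal.ofReal (((ε:ℝ) ^ n) ^ (1 / (n:ℝ))) := by
        apply ENNReal.ofReal_le_ofReal
        exact Real.rpow_le_rpow (norm_nonneg _) hb (by positivity)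
    _ = (ε : ℝ≥0∞) := by
        rw [← Real.rpow_natCast (ε:ℝ) n, ← Real.rpow_mul ε.coe_nonneg,
          mul_one_div, div_self hnn.ne', Real.rpow_one]
        simp [ENNReal.ofReal_coe_nnreal]

private lemma Snil.mul_comm' {q c : A} (h : Snil q) (hc : q * c = c * q) : Snil (q * c) := by
  intro ε hε
  have hc' : Commute q c := hc
  have hpos : (0:ℝ) < ‖c‖ + 1 := by positivity
  obtain ⟨N, hN⟩ := h (ε / (‖c‖ + 1)) (by positivity)
  refine ⟨max N 1, fun n hn => ?_⟩
  have hn1 : 1 ≤ n := le_trans (le_max_right N 1) hn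
  have hn' : N ≤ n := le_trans (le_max_left N 1) hn
  rw [hc'.mul_pow]
  calc ‖q ^ n * c ^ n‖ ≤ ‖q ^ n‖ * ‖c ^ n‖ := norm_mul_le _ _
    _ ≤ (ε / (‖c‖ + 1)) ^ n * (‖c‖ + 1) ^ n := by
        apply mul_le_mul (hN n hn') ?_ (norm_nonneg _) (by positivity)
        calc ‖c ^ n‖ ≤ ‖c‖ ^ n := norm_pow_le' c (by omega : 0 < n)
          _ ≤ (‖c‖ + 1) ^ n := by
              apply pow_le_pow_left₀ (norm_nonneg _) (by linarith)
    _ = ε ^ n := by rw [← mul_pow, div_mul_cancel₀ _ hpos.ne']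

private lemma Snil.neg' {q : A} (h : Snil q) : Snil (-q) := by
  intro ε hε
  obtain ⟨N, hN⟩ := h ε hε
  refine ⟨N, fun n hn => ?_⟩
  have : ‖(-q) ^ n‖ = ‖q ^ n‖ := by
    rcases neg_one_pow_eq_or A n with h1 | h1 <;>
      rw [neg_pow, h1] <;> simp
  rw [this]; exact hN n hn

private lemma isUnit_one_add_of_radius_zero {z : A} (h : spectralRadius ℂ z = 0) :
    IsUnit (1 + z) := by
  have h1 : spectralRadius ℂ z < ‖(-1 : ℂ)‖₊ := by
    rw [h]; simp
  have := spectrum.mem_resolventSet_of_spectralRadius_lt h1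
  rw [spectrum.mem_resolventSet_iff] at this
  have heq : algebraMap ℂ A (-1) - z = -(1 + z) := by
    simp [Algebra.algebraMap_eq_smul_one]
    abel
  rw [heq] at this
  simpa using this.neg

private lemma IsQuasinilpotent.radius_zero {q : A} (h : IsQuasinilpotent q) :
    spectralRadius ℂ q = 0 := by
  refine le_antisymm ?_ zero_le
  rw [spectralRadius]
  refine iSup₂_le fun k hk => ?_
  rcases eq_or_ne k 0 with rfl | hk0
  · simp
  exfalso
  have hcomm : ((-k⁻¹) • (1:A)) * q = q * ((-k⁻¹) • (1:A)) := by
    rw [smul_mul_assoc, one_mul, mul_smul_comm, mul_one]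
  have hu := h _ hcomm
  rw [mul_smul_comm, mul_one] at hu
  have : IsUnit (algebraMap ℂ A k - q) := by
    have hmap : algebraMap ℂ A k - q = k • (1 + (-k⁻¹) • q) := by
      rw [smul_add, smul_smul, Algebra.algebraMap_eq_smul_one]
      rw [mul_neg, mul_inv_cancel₀ hk0]
      simp [sub_eq_add_neg]
    rw [hmap]
    have h1 : IsUnit (k • (1:A)) := by
      rw [← Algebra.algebraMap_eq_smul_one]
      exact (isUnit_iff_ne_zero.mpr hk0).map (algebraMap ℂ A)
    have := h1.mul hu
    rwa [smul_mul_assoc, one_mul] at this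
  exact (spectrum.mem_iff.mp hk) this

private lemma Snil.isQuasinilpotent {z : A} (h : Snil z) : IsQuasinilpotent z :=
  fun x hx => isUnit_one_add_of_radius_zero (radius_zero_of_snil (h.mul_comm' hx.symm))

/-- geometric bound with a uniform constant -/
private lemma Snil.exists_bound {q : A} (h : Snil q) :
    ∃ K : ℝ, 1 ≤ K ∧ ∀ j : ℕ, ‖q ^ j‖ ≤ K * (4⁻¹ : ℝ) ^ j := by
  obtain ⟨N, hN⟩ := h 4⁻¹ (by norm_num)
  refine ⟨(∑ j ∈ range N, ‖q ^ j‖ * 4 ^ j) + 1, ?_, fun j => ?_⟩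
  · have : (0:ℝ) ≤ ∑ j ∈ range N, ‖q ^ j‖ * 4 ^ j :=
      Finset.sum_nonneg fun i _ => by positivity
    linarith
  rcases lt_or_ge j N with hj | hj
  · have h1 : ‖q ^ j‖ * 4 ^ j ≤ ∑ i ∈ range N, ‖q ^ i‖ * 4 ^ i :=
      Finset.single_le_sum (f := fun i => ‖q ^ i‖ * 4 ^ i) (fun i _ => by positivity)
        (mem_range.mpr hj)
    have h4 : (0:ℝ) < 4 ^ j := by positivity
    rw [show ((4:ℝ)⁻¹) ^ j = ((4:ℝ) ^ j)⁻¹ by rw [inv_pow]]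
    rw [le_mul_inv_iff₀ h4]
    linarith
  · have h1 : ‖q ^ j‖ ≤ (4⁻¹:ℝ) ^ j := hN j hj
    have h2 : (0:ℝ) ≤ (4⁻¹:ℝ) ^ j := by positivity
    nlinarith [Finset.sum_nonneg
      (fun i (_ : i ∈ range N) => (by positivity : (0:ℝ) ≤ ‖q ^ i‖ * 4 ^ i))]

/-- If `q` has zero spectral radius and `w = wq - qw`, then `w = 0`. -/
private lemma eq_zero_of_eq_comm {q w : A} (hq : Snil q) (hw : w = w * q - q * w) : w = 0 := by
  set L : Module.End ℂ A := LinearMap.mulRight ℂ q with hL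
  set M : Module.End ℂ A := LinearMap.mulLeft ℂ q with hM
  have hcomm : Commute L (-M) :=
    ((LinearMap.commute_mulLeft_right q q).symm).neg_right
  have hLpow : ∀ (k : ℕ) (v : A), (L ^ k) v = v * q ^ k := by
    intro k v
    rw [hL, LinearMap.pow_mulRight, LinearMap.mulRight_apply]
  have hMpow : ∀ (j : ℕ) (v : A), ((-M) ^ j) v = ((-1:ℝ) ^ j) • (q ^ j * v) := by
    intro j
    induction j with
    | zero => intro v; simp
    | succ j ih =>
      intro v
      rw [pow_succ, Module.End.mul_apply]
      have : (-M) v = -(q * v) := by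
        rw [LinearMap.neg_apply, hM, LinearMap.mulLeft_apply]
      rw [this, ih, mul_neg, smul_neg, pow_succ (-1:ℝ) j, mul_neg_one, neg_smul,
        pow_succ q j, mul_assoc]
  have hfix : ∀ m : ℕ, ((L + (-M)) ^ m) w = w := by
    intro m
    induction m with
    | zero => simp
    | succ m ih =>
      rw [pow_succ, Module.End.mul_apply]
      have hTw : (L + (-M)) w = w := by
        rw [LinearMap.add_apply, LinearMap.neg_apply, hL, hM,
          LinearMap.mulRight_apply, LinearMap.mulLeft_apply, ← sub_eq_add_neg, ← hw]
      rw [hTw, ih]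
  obtain ⟨K, hK1, hK⟩ := hq.exists_bound
  have hKpos : (0:ℝ) < K := lt_of_lt_of_le one_pos hK1
  have hbound : ∀ m : ℕ, ‖w‖ ≤ K ^ 2 * (2⁻¹ : ℝ) ^ m * ‖w‖ := by
    intro m
    conv_lhs => rw [← hfix m, (hcomm.add_pow m)]
    rw [LinearMap.sum_apply]
    refine le_trans (norm_sum_le _ _) ?_
    have hterm : ∀ k ∈ range (m + 1),
        ‖(L ^ k * (-M) ^ (m - k) * (m.choose k : Module.End ℂ A)) w‖ ≤
          (m.choose k : ℝ) * (K * (4⁻¹:ℝ) ^ (m - k)) * ‖w‖ * (K * (4⁻¹:ℝ) ^ k) := by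
      intro k hk
      rw [Module.End.mul_apply, Module.End.mul_apply, Module.End.natCast_apply,
        hMpow, hLpow, smul_mul_assoc]
      rw [norm_smul]
      have h1 : ‖(-1:ℝ) ^ (m - k)‖ = 1 := by
        rcases neg_one_pow_eq_or ℝ (m - k) with h | h <;> rw [h] <;> simp
      rw [h1, one_mul]
      calc ‖q ^ (m - k) * ((m.choose k) • w) * q ^ k‖
          ≤ ‖q ^ (m - k) * ((m.choose k) • w)‖ * ‖q ^ k‖ := norm_mul_le _ _
        _ ≤ ‖q ^ (m - k)‖ * ‖(m.choose k) • w‖ * ‖q ^ k‖ := by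
            gcongr; exact norm_mul_le _ _
        _ ≤ ‖q ^ (m - k)‖ * ((m.choose k : ℝ) * ‖w‖) * ‖q ^ k‖ := by
            gcongr
            exact norm_nsmul_le
        _ ≤ (K * (4⁻¹:ℝ) ^ (m - k)) * ((m.choose k : ℝ) * ‖w‖) * (K * (4⁻¹:ℝ) ^ k) := by
            gcongr <;> [exact hK _; exact hK _]
        _ = (m.choose k : ℝ) * (K * (4⁻¹:ℝ) ^ (m - k)) * ‖w‖ * (K * (4⁻¹:ℝ) ^ k) := by
            ring
    refine le_trans (Finset.sum_le_sum hterm) ?_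
    have heq : ∀ k ∈ range (m + 1),
        (m.choose k : ℝ) * (K * (4⁻¹:ℝ) ^ (m - k)) * ‖w‖ * (K * (4⁻¹:ℝ) ^ k) =
          (m.choose k : ℝ) * (K ^ 2 * (4⁻¹:ℝ) ^ m * ‖w‖) := by
      intro k hk
      have hkm : k ≤ m := Finset.mem_range_succ_iff.mp hk
      have : (4⁻¹:ℝ) ^ (m - k) * (4⁻¹:ℝ) ^ k = (4⁻¹:ℝ) ^ m := by
        rw [← pow_add]; congr 1; omega
      rw [← this]; ring
    rw [Finset.sum_congr rfl heq, ← Finset.sum_mul]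
    have hsum : ∑ k ∈ range (m + 1), (m.choose k : ℝ) = 2 ^ m := by
      exact_mod_cast congrArg (Nat.cast : ℕ → ℝ) (Nat.sum_range_choose m)
    rw [hsum]
    have : (2:ℝ) ^ m * (K ^ 2 * (4⁻¹:ℝ) ^ m * ‖w‖)
        = K ^ 2 * ((2:ℝ) ^ m * (4⁻¹:ℝ) ^ m) * ‖w‖ := by ring
    rw [this, ← mul_pow]
    norm_num
  by_contra hw0
  have hwpos : 0 < ‖w‖ := norm_pos_iff.mpr hw0
  obtain ⟨m, hm⟩ := exists_pow_lt_of_lt_one (show (0:ℝ) < (K^2)⁻¹ by positivity)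
    (by norm_num : (2⁻¹:ℝ) < 1)
  have h2 : K ^ 2 * (2⁻¹:ℝ) ^ m < 1 := by
    have hKK : (0:ℝ) < K ^ 2 := by positivity
    calc K ^ 2 * (2⁻¹:ℝ) ^ m < K ^ 2 * (K ^ 2)⁻¹ := mul_lt_mul_of_pos_left hm hKK
      _ = 1 := mul_inv_cancel₀ hKK.ne'
  have := hbound m
  nlinarith

end Banach

theorem stmt15 {A : Type*} [NormedRing A] [NormedAlgebra ℂ A] [CompleteSpace A]
    (a b : A) (h : IsGHInverse a b) :
    ∀ n : ℕ, 1 ≤ n → IsGHInverse (a ^ n) (b ^ n) := by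
  obtain ⟨h1, h2, h3⟩ := h
  have hCab : Commute a b := (h2 a rfl).symm
  set p : A := a * b with hp_def
  have hCap : Commute a p := (Commute.refl a).mul_right hCab
  have hCbp : Commute b p := hCab.symm.mul_right (Commute.refl b)
  have hpp : p * p = p := by
    have e : (a*b)*(a*b) = a*(b*a*b) := by noncomm_ring
    rw [hp_def, e, h1]
  have hbp : b * p = b := by rw [hp_def, ← mul_assoc]; exact h1
  set q : A := a ^ 2 - p with hq_def
  have hq3 : IsQuasinilpotent q := h3
  have hCaq : Commute a q := ((Commute.refl a).pow_right 2).sub_right hCap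
  have hCpq : Commute p q := (hCap.symm.pow_right 2).sub_right (Commute.refl p)
  have hsq : Snil q := snil_of_radius_zero hq3.radius_zero
  intro n hn
  obtain ⟨m, rfl⟩ : ∃ m, n = m + 1 := ⟨n - 1, by omega⟩
  set n := m + 1 with hn_def
  have hCcd : Commute (a ^ n) (b ^ n) := hCab.pow_pow n n
  have hcd : a ^ n * b ^ n = p := by
    rw [← hCab.mul_pow]
    exact (show IsIdempotentElem p from hpp).pow_succ_eq m
  have hdc : b ^ n * a ^ n = p := by rw [← hCcd.eq]; exact hcd
  have hdp : b ^ n * p = b ^ n := by rw [pow_succ, mul_assoc, hbp]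
  -- the geometric sum factorization
  have hCxp : Commute (a ^ 2) p := hCap.pow_left 2
  have hgeom := hCxp.geom_sum₂_mul n
  set s : A := ∑ i ∈ range n, (a ^ 2) ^ i * p ^ (n - 1 - i) with hs_def
  have hqx : Commute q (a ^ 2) := (hCaq.pow_left 2).symm
  have hqp' : Commute q p := hCpq.symm
  have hqs : Commute q s :=
    Commute.sum_right _ _ _ (fun i _ => (hqx.pow_right i).mul_right (hqp'.pow_right _))
  have hxn : (a ^ 2) ^ n = a ^ n * a ^ n := by rw [← pow_mul, two_mul, pow_add]
  have hqn_eq : a ^ n * a ^ n - p = q * s := by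
    rw [← hq_def] at hgeom
    rw [← hxn, show p = p ^ n from ((show IsIdempotentElem p from hpp).pow_succ_eq m).symm,
      ← hgeom]
    exact (hqs.eq).symm
  have hsqn : Snil (a ^ n * a ^ n - p) := by
    rw [hqn_eq]; exact hsq.mul_comm' hqs.eq
  refine ⟨?_, ?_, ?_⟩
  · -- b^n * a^n * b^n = b^n
    calc b ^ n * a ^ n * b ^ n = p * b ^ n := by rw [hdc]
      _ = b ^ n * p := ((hCbp.pow_left n).eq).symm
      _ = b ^ n := hdp
  · -- double commutant
    intro y hy
    set qn : A := a ^ n * a ^ n - p with hqn_def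
    have hCpqn : Commute p qn :=
      ((hCap.symm.pow_right n).mul_right (hCap.symm.pow_right n)).sub_right (Commute.refl p)
    have hqnp : qn * p = p * qn := hCpqn.symm.eq
    have hccpq : a ^ n * a ^ n = p + qn := by rw [hqn_def]; abel
    have hy2 : y * (a ^ n * a ^ n) = (a ^ n * a ^ n) * y := by
      rw [← mul_assoc, hy, mul_assoc, hy, ← mul_assoc]
    have hE : y * p - p * y = qn * y - y * qn := by
      have h' : y * p + y * qn = p * y + qn * y := by
        have e := hy2
        rw [hccpq, mul_add, add_mul] at e
        exact e
      have h'' : y * p + y * qn = qn * y + p * y := by rw [h']; exact add_comm _ _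
      calc y * p - p * y = (y * p + y * qn) - (p * y + y * qn) := by abel
        _ = (qn * y + p * y) - (p * y + y * qn) := by rw [h'']
        _ = qn * y - y * qn := by abel
    have hw1 : p * y - p * y * p = 0 :=
      eq_zero_of_eq_comm hsqn (GH_key1 p y qn hpp hqnp hE)
    have hw2 : y * p - p * y * p = 0 := by
      apply eq_zero_of_eq_comm hsqn.neg'
      have hk := GH_key2 p y qn hpp hqnp hE
      have e : (y*p - p*y*p) * -qn - -qn * (y*p - p*y*p)
          = qn*(y*p - p*y*p) - (y*p - p*y*p)*qn := by noncomm_ring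
      rw [e]; exact hk
    have hypc : y * p = p * y := by
      have e1 : y * p = p * y * p := by rwa [sub_eq_zero] at hw2
      have e2 : p * y = p * y * p := by rwa [sub_eq_zero] at hw1
      rw [e1, ← e2]
    have hyqn : y * qn = qn * y := by
      rw [hqn_def, mul_sub, sub_mul, hy2, hypc]
    have hqnQN : IsQuasinilpotent qn := hsqn.isQuasinilpotent
    have hu : IsUnit (1 + qn * p) := hqnQN p hqnp.symm
    obtain ⟨U, hU⟩ := hu
    have hyu : y * (1 + qn * p) = (1 + qn * p) * y := by
      rw [mul_add, add_mul, mul_one, one_mul]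
      congr 1
      rw [← mul_assoc, hyqn, mul_assoc, hypc, ← mul_assoc]
    have hyUinv : y * ↑U⁻¹ = ↑U⁻¹ * y := by
      have hcu : Commute y (U : A) := by rw [hU]; exact hyu
      exact (hcu.units_inv_right).eq
    have hbnu : b ^ n * (1 + qn * p) = p * a ^ n := by
      rw [mul_add, mul_one]
      have e1 : b ^ n * (qn * p) = b ^ n * qn := by
        rw [hqnp, ← mul_assoc, hdp]
      rw [e1]
      have e2 : b ^ n * (a ^ n * a ^ n) = p * a ^ n := by rw [← mul_assoc, hdc]
      rw [hccpq, mul_add, hdp] at e2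
      exact e2
    have hbn_eq : b ^ n = p * a ^ n * ↑U⁻¹ := by
      rw [Units.eq_mul_inv_iff_mul_eq, hU]
      exact hbnu
    rw [hbn_eq]
    calc p * a ^ n * ↑U⁻¹ * y = p * a ^ n * (↑U⁻¹ * y) := by rw [mul_assoc]
      _ = p * a ^ n * (y * ↑U⁻¹) := by rw [hyUinv]
      _ = p * (a ^ n * y) * ↑U⁻¹ := by noncomm_ring
      _ = p * (y * a ^ n) * ↑U⁻¹ := by rw [← hy]
      _ = p * y * a ^ n * ↑U⁻¹ := by noncomm_ring
      _ = y * p * a ^ n * ↑U⁻¹ := by rw [hypc]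
      _ = y * (p * a ^ n * ↑U⁻¹) := by noncomm_ring
  · -- quasinilpotency
    have e : (a ^ n) ^ 2 - a ^ n * b ^ n = a ^ n * a ^ n - p := by rw [sq, hcd]
    rw [e]
    exact hsqn.isQuasinilpotent
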